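/- Let F ≥ 0 be a real number, and let sgn : ℝ → Set ℝ be the set-valued signum, sgn(x) = {x/|x|} if x ≠ 0 and sgn(0) = [−1,1]. Then for all x, y ∈ ℝ: x ∈ F·sgn(y − x) if and only if x = proj_{[−F,F]}(y). -/
import Mathlib


/-- Set-valued signum: `{1}` if positive, `{-1}` if negative, `[-1,1]` at zero. -/
noncomputable def sgnSet (w : ℝ) : Set ℝ :=
  if 0 < w then {1} else if w < 0 then {-1} else Set.Icc (-1) 1

/-- Projection onto the closed interval `[c,d]` (for `c ≤ d`): `max c (min d x)`. -/
noncomputable def proj (c d x : ℝ) : ℝ := max c (min d x)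

theorem stmt_1 (F : ℝ) (hF : 0 ≤ F) (x y : ℝ) :
    x ∈ (fun s => F * s) '' sgnSet (y - x) ↔ x = proj (-F) F y := by
  rcases lt_trichotomy (y - x) 0 with h | h | h
  · simp only [sgnSet, proj, if_neg (by linarith : ¬ 0 < y - x), if_pos h,
      Set.image_singleton, Set.mem_singleton_iff]
    rw [max_def, min_def]
    constructor <;> intro hx <;> split_ifs at * <;> linarith
  · have hyx : y = x := by linarith
    subst hyx
    simp only [sgnSet, h, lt_irrefl, if_neg (lt_irrefl 0), if_neg (lt_irrefl (0:ℝ)),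
      Set.mem_image, Set.mem_Icc, proj]
    constructor
    · rintro ⟨s, ⟨hs1, hs2⟩, hx⟩
      have h1 : -F ≤ F * s := by nlinarith
      have h2 : F * s ≤ F := by nlinarith
      rw [← hx, min_eq_right h2, max_eq_right (by linarith)]
    · intro hx
      have h1 : -F ≤ y := by
        rw [hx]; exact le_max_left _ _
      have h2 : y ≤ F := by
        rw [hx]
        exact le_trans (max_le (by linarith) (min_le_left _ _)) le_rfl
      rcases eq_or_lt_of_le hF with hF0 | hF0
      · exact ⟨0, ⟨by norm_num, by norm_num⟩, by rw [hx]; simp [← hF0]⟩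
      · refine ⟨y / F, ⟨?_, ?_⟩, ?_⟩
        · rw [le_div_iff₀ hF0]; linarith
        · rw [div_le_iff₀ hF0]; linarith
        · rw [mul_div_cancel₀ _ (ne_of_gt hF0), hx, min_eq_right h2,
            max_eq_right (by linarith)]
  · simp only [sgnSet, proj, if_pos h, Set.image_singleton, Set.mem_singleton_iff]
    rw [max_def, min_def]
    constructor <;> intro hx <;> split_ifs at * <;> linarith
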